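/- Let l₁, l₃, w be positive integers and set N = w·l₃. The set of polynomials Q ∈ ℂ[z] such that (i) Q has degree l₁ − 1, (ii) Q is squarefree and every complex root r of Q satisfies r^N = 1 and r ≠ 1, and (iii) (−1)^{l₃} · Q(0)^{l₃} = 1, is finite of cardinality l₃ · C(N − 1, l₁ − 1), where C(·,·) denotes the binomial coefficient. -/

import Mathlib

/-- The set of polynomials `Q ∈ ℂ[z]` of degree `l₁ − 1`, squarefree, all of whose
roots are `(w·l₃)`-th roots of unity different from `1`, and normalized by
`(−1)^{l₃} · Q(0)^{l₃} = 1`. -/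
def polySet (l₁ l₃ w : ℕ) : Set (Polynomial ℂ) :=
  {Q | Q ≠ 0 ∧ Q.natDegree = l₁ - 1 ∧ Squarefree Q ∧
    (∀ r : ℂ, Q.IsRoot r → r ^ (w * l₃) = 1 ∧ r ≠ 1) ∧
    (-1 : ℂ) ^ l₃ * (Q.eval 0) ^ l₃ = 1}

open Polynomial Finset in
private lemma eval_zero_prod (c : ℂ) (S : Finset ℂ) :
    (Polynomial.C c * ∏ r ∈ S, (X - C r)).eval 0
      = c * ((-1) ^ S.card * ∏ r ∈ S, r) := by
  rw [eval_mul, eval_C, eval_prod]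
  congr 1
  rw [← Finset.prod_const (-1 : ℂ), ← Finset.prod_mul_distrib]
  refine Finset.prod_congr rfl fun r _ => ?_
  simp [neg_one_mul]

/-- Let `l₁, l₃, w` be positive integers and `N = w·l₃`. The set of polynomials
`Q ∈ ℂ[z]` of degree `l₁ − 1`, squarefree with all roots `N`-th roots of unity
distinct from `1`, and with `(−1)^{l₃} Q(0)^{l₃} = 1`, is finite of cardinality
`l₃ · C(N − 1, l₁ − 1)`. -/
theorem stmt_3 (l₁ l₃ w : ℕ) (hl₁ : 0 < l₁) (hl₃ : 0 < l₃) (hw : 0 < w) :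
    (polySet l₁ l₃ w).Finite ∧
    (polySet l₁ l₃ w).ncard = l₃ * (w * l₃ - 1).choose (l₁ - 1) := by
  classical
  open Polynomial Finset in
  set N := w * l₃ with hNdef
  have hN : 0 < N := Nat.mul_pos hw hl₃
  set R : Finset ℂ := (nthRootsFinset N (1 : ℂ)).erase 1 with hRdef
  set D : Finset (Finset ℂ) := R.powersetCard (l₁ - 1) with hDdef
  set Z : Finset ℂ := nthRootsFinset l₃ (1 : ℂ) with hZdef
  set t : Finset ℂ → ℂ := fun S => (-1) ^ l₁ * ∏ r ∈ S, r with htdef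
  set F : Finset ℂ × ℂ → Polynomial ℂ :=
    fun p => C (p.2 / t p.1) * ∏ r ∈ p.1, (X - C r) with hFdef
  -- basic facts
  have hRne : ∀ {r : ℂ}, r ∈ R → r ≠ 0 := by
    intro r hr
    exact ne_zero_of_mem_nthRootsFinset one_ne_zero (Finset.mem_of_mem_erase hr)
  have hRprop : ∀ {r : ℂ}, r ∈ R → r ^ N = 1 ∧ r ≠ 1 := by
    intro r hr
    exact ⟨(mem_nthRootsFinset hN 1).mp (Finset.mem_of_mem_erase hr),
      Finset.ne_of_mem_erase hr⟩
  have htne : ∀ {S : Finset ℂ}, S ⊆ R → t S ≠ 0 := by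
    intro S hS
    refine mul_ne_zero (pow_ne_zero _ (by norm_num)) (Finset.prod_ne_zero_iff.mpr ?_)
    exact fun r hr => hRne (hS hr)
  have hmonic : ∀ S : Finset ℂ, (∏ r ∈ S, (X - C r) : Polynomial ℂ).Monic :=
    fun S => monic_prod_of_monic _ _ fun r _ => monic_X_sub_C r
  have hPne : ∀ S : Finset ℂ, (∏ r ∈ S, (X - C r) : Polynomial ℂ) ≠ 0 :=
    fun S => (hmonic S).ne_zero
  have hdegP : ∀ S : Finset ℂ, (∏ r ∈ S, (X - C r) : Polynomial ℂ).natDegree = S.card := by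
    intro S
    rw [natDegree_prod _ _ fun r _ => X_sub_C_ne_zero r]
    simp
  -- the key set equality
  have hkey : polySet l₁ l₃ w = ↑((D ×ˢ Z).image F) := by
    ext Q
    simp only [Finset.coe_image, Set.mem_image, Finset.mem_coe, Finset.mem_product]
    constructor
    · rintro ⟨hQ0, hdeg, hsf, hroots, hnorm⟩
      have hsplit : Q.Splits := IsAlgClosed.splits Q
      have hcard : Q.roots.card = Q.natDegree := (splits_iff_card_roots).mp hsplit
      have hsep : Q.Separable := PerfectField.separable_iff_squarefree.mpr hsf
      have hnodup : Q.roots.Nodup := Polynomial.nodup_roots hsep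
      set S : Finset ℂ := Q.roots.toFinset with hSdef
      have hSval : S.val = Q.roots := Multiset.dedup_eq_self.mpr hnodup
      have hScard : S.card = l₁ - 1 := by
        rw [Finset.card_def, hSval, hcard, hdeg]
      have hSsub : S ⊆ R := by
        intro r hr
        have hr' : Q.IsRoot r := isRoot_of_mem_roots (Multiset.mem_toFinset.mp hr)
        obtain ⟨h1, h2⟩ := hroots r hr'
        exact Finset.mem_erase.mpr ⟨h2, (mem_nthRootsFinset hN 1).mpr h1⟩
      have hQeq : Q = C Q.leadingCoeff * ∏ r ∈ S, (X - C r) := by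
        conv_lhs => rw [← C_leadingCoeff_mul_prod_multiset_X_sub_C hcard]
        congr 1
        rw [Finset.prod_eq_multiset_prod, hSval]
      have hc0 : Q.leadingCoeff ≠ 0 := leadingCoeff_ne_zero.mpr hQ0
      have hp0 : (∏ r ∈ S, r) ≠ 0 :=
        Finset.prod_ne_zero_iff.mpr fun r hr => hRne (hSsub hr)
      have heval : Q.eval 0 = Q.leadingCoeff * ((-1) ^ (l₁ - 1) * ∏ r ∈ S, r) := by
        conv_lhs => rw [hQeq]
        rw [eval_zero_prod, hScard]
      have hts : t S = -((-1) ^ (l₁ - 1) * ∏ r ∈ S, r) := by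
        have : (-1 : ℂ) ^ l₁ = -(-1) ^ (l₁ - 1) := by
          conv_lhs => rw [← Nat.sub_add_cancel hl₁]
          rw [pow_succ, mul_neg_one]
        rw [htdef]
        dsimp only
        rw [this]
        ring
      set ζ : ℂ := -(Q.eval 0) with hζdef
      have hζt : ζ = Q.leadingCoeff * t S := by
        rw [hζdef, heval, hts]; ring
      have hζZ : ζ ∈ Z := by
        rw [hZdef, mem_nthRootsFinset hl₃, hζdef, neg_pow]
        exact hnorm
      refine ⟨(S, ζ), ⟨Finset.mem_powersetCard.mpr ⟨hSsub, hScard⟩, hζZ⟩, ?_⟩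
      rw [hFdef]
      dsimp only
      rw [hζt, mul_div_assoc, div_self (htne hSsub), mul_one]
      exact hQeq.symm
    · rintro ⟨⟨S, ζ⟩, ⟨hSD, hζZ⟩, rfl⟩
      obtain ⟨hSsub, hScard⟩ := Finset.mem_powersetCard.mp hSD
      have hζ1 : ζ ^ l₃ = 1 := (mem_nthRootsFinset hl₃ 1).mp hζZ
      have hζ0 : ζ ≠ 0 := ne_zero_of_mem_nthRootsFinset one_ne_zero hζZ
      have hts := htne hSsub
      have hc0 : ζ / t S ≠ 0 := div_ne_zero hζ0 hts
      have hp0 : (∏ r ∈ S, r) ≠ 0 :=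
        Finset.prod_ne_zero_iff.mpr fun r hr => hRne (hSsub hr)
      have hQ0 : F (S, ζ) ≠ 0 := mul_ne_zero (by simpa using hc0) (hPne S)
      have hQroots : (F (S, ζ)).roots = S.val := by
        rw [hFdef]
        dsimp only
        rw [roots_C_mul _ hc0, roots_prod_X_sub_C]
      refine ⟨hQ0, ?_, ?_, ?_, ?_⟩
      · rw [hFdef]
        dsimp only
        rw [natDegree_C_mul hc0, hdegP, hScard]
      · have hnodup : (F (S, ζ)).roots.Nodup := by rw [hQroots]; exact S.nodup
        have hsplit : (F (S, ζ)).Splits := IsAlgClosed.splits _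
        exact ((nodup_roots_iff_of_splits hQ0 hsplit).mp hnodup).squarefree
      · intro r hr
        have : r ∈ (F (S, ζ)).roots := (mem_roots hQ0).mpr hr
        rw [hQroots] at this
        exact hRprop (hSsub this)
      · have heval : (F (S, ζ)).eval 0 = ζ / t S * ((-1) ^ (l₁ - 1) * ∏ r ∈ S, r) := by
          rw [hFdef]
          dsimp only
          rw [eval_zero_prod, hScard]
        have hts' : t S = -((-1) ^ (l₁ - 1) * ∏ r ∈ S, r) := by
          have h1 : (-1 : ℂ) ^ l₁ = -(-1) ^ (l₁ - 1) := by
            conv_lhs => rw [← Nat.sub_add_cancel hl₁]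
            rw [pow_succ, mul_neg_one]
          rw [htdef]
          dsimp only
          rw [h1]
          ring
        have hev : (F (S, ζ)).eval 0 = -ζ := by
          rw [heval]
          have hx : ((-1 : ℂ) ^ (l₁ - 1) * ∏ r ∈ S, r) ≠ 0 :=
            mul_ne_zero (pow_ne_zero _ (by norm_num)) hp0
          rw [hts'] at hts ⊢
          field_simp
        rw [hev, ← mul_pow, neg_mul_neg, one_mul]
        exact hζ1
  -- injectivity of F on D ×ˢ Z
  have hinj : Set.InjOn F ↑(D ×ˢ Z) := by
    rintro ⟨S, ζ⟩ h1 ⟨S', ζ'⟩ h2 heq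
    simp only [Finset.mem_coe, Finset.mem_product] at h1 h2
    obtain ⟨hSD, hζ⟩ := h1
    obtain ⟨hSD', hζ'⟩ := h2
    have hS := (Finset.mem_powersetCard.mp hSD).1
    have hS' := (Finset.mem_powersetCard.mp hSD').1
    have hc0 : ζ / t S ≠ 0 := div_ne_zero (ne_zero_of_mem_nthRootsFinset one_ne_zero hζ) (htne hS)
    have hc0' : ζ' / t S' ≠ 0 := div_ne_zero (ne_zero_of_mem_nthRootsFinset one_ne_zero hζ') (htne hS')
    have hroots : S.val = S'.val := by
      have h3 : (F (S, ζ)).roots = (F (S', ζ')).roots := by rw [heq]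
      rw [hFdef] at h3
      dsimp only at h3
      rwa [roots_C_mul _ hc0, roots_prod_X_sub_C, roots_C_mul _ hc0',
        roots_prod_X_sub_C] at h3
    have hSS : S = S' := Finset.val_injective hroots
    subst hSS
    have : C (ζ / t S) = C (ζ' / t S) := by
      rw [hFdef] at heq
      dsimp only at heq
      exact mul_right_cancel₀ (hPne S) heq
    have hd : ζ / t S = ζ' / t S := C_injective this
    have : ζ = ζ' := by
      rw [div_eq_div_iff (htne hS) (htne hS)] at hd
      exact mul_right_cancel₀ (htne hS) hd
    rw [this]
  -- wrap up
  have hZcard : Z.card = l₃ :=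
    (Complex.isPrimitiveRoot_exp l₃ hl₃.ne').card_nthRootsFinset
  have hRcard : R.card = N - 1 := by
    rw [hRdef, Finset.card_erase_of_mem (one_mem_nthRootsFinset hN),
      (Complex.isPrimitiveRoot_exp N hN.ne').card_nthRootsFinset]
  have hDcard : D.card = (N - 1).choose (l₁ - 1) := by
    rw [hDdef, Finset.card_powersetCard, hRcard]
  constructor
  · rw [hkey]; exact Finset.finite_toSet _
  · rw [hkey, Set.ncard_coe_finset, Finset.card_image_of_injOn hinj,
      Finset.card_product, hDcard, hZcard, mul_comm]
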